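/- In the eigensystem setting, suppose (h_ν) is uniformly bounded with sup_ν ‖h_ν‖_∞ ≤ c_h, and γ_ν ≥ c·ν^{2m} for ν ≥ 1 with m > 1/2 and γ_0 = 0, h_0 bounded. Then there exists a constant c_m > 0 depending only on m, c, c_h such that for all λ ∈ (0,1] and h = λ^{1/(2m)}, the kernel K_z(·) = Σ_ν h_ν(z)h_ν(·)/(1+λγ_ν) satisfies sup_{z,z'∈[0,1]} |K_z(z')| ≤ c_m² h^{-1}; in particular K(z_0,z_0) = O(h^{-1}). -/

import Mathlib

open Set

/-- Bernoulli-type inequality: `p·(x+1)^{-(p+1)} ≤ x^{-p} - (x+1)^{-p}`. -/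
lemma core_ineq (p : ℝ) (hp : 0 < p) (x : ℝ) (hx : 1 ≤ x) :
    p * (x + 1) ^ (-(p + 1)) ≤ x ^ (-p) - (x + 1) ^ (-p) := by
  have hx0 : (0:ℝ) < x := lt_of_lt_of_le one_pos hx
  have hx1 : (0:ℝ) < x + 1 := by linarith
  set t : ℝ := (x + 1)⁻¹ with htdef
  have ht0 : 0 < t := inv_pos.mpr hx1
  have ht1 : t < 1 := by
    rw [htdef]
    rw [inv_lt_one₀ hx1]
    linarith
  have h1t : (0:ℝ) < 1 - t := by linarith
  have hA : (1 + p * t) * (1 - t) ^ p ≤ 1 := by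
    have h1 : (1 - t) ≤ Real.exp (-t) := by
      have := Real.add_one_le_exp (-t); linarith
    have h1' : (1 - t) ^ p ≤ Real.exp (-t) ^ p :=
      Real.rpow_le_rpow h1t.le h1 hp.le
    have h2 : Real.exp (-t) ^ p = Real.exp (-t * p) := (Real.exp_mul _ _).symm
    have h3 : 1 + p * t ≤ Real.exp (p * t) := by
      have := Real.add_one_le_exp (p * t); linarith
    calc (1 + p * t) * (1 - t) ^ p
        ≤ Real.exp (p * t) * Real.exp (-t * p) := by
          apply mul_le_mul h3 (h1'.trans_eq h2) (Real.rpow_nonneg h1t.le p) (Real.exp_pos _).le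
      _ = 1 := by rw [← Real.exp_add]; ring_nf; exact Real.exp_zero
  have hC : 1 + p * t ≤ (1 - t) ^ (-p) := by
    have hpos : 0 < (1 - t) ^ p := Real.rpow_pos_of_pos h1t p
    rw [Real.rpow_neg h1t.le, ← one_div, le_div_iff₀ hpos]
    exact hA
  have hxeq : x = (x + 1) * (1 - t) := by
    rw [htdef, mul_sub, mul_one, mul_inv_cancel₀ hx1.ne']
    ring
  have hxp : x ^ (-p) = (x + 1) ^ (-p) * (1 - t) ^ (-p) := by
    conv_lhs => rw [hxeq]
    rw [Real.mul_rpow hx1.le h1t.le]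
  have hmain : (x + 1) ^ (-p) * (1 + p * t) ≤ x ^ (-p) := by
    rw [hxp]
    exact mul_le_mul_of_nonneg_left hC (Real.rpow_nonneg hx1.le _)
  have hsplit : (x + 1) ^ (-(p + 1)) = (x + 1) ^ (-p) * t := by
    rw [show -(p+1) = -p + (-1) by ring, Real.rpow_add hx1, Real.rpow_neg_one]
  rw [hsplit]
  nlinarith [Real.rpow_nonneg hx1.le (-p)]

/-- Telescoping tail estimate. -/
lemma tele_sum (p : ℝ) (hp : 0 < p) (N : ℕ) (hN : 1 ≤ N) (M : ℕ) :
    ∑ i ∈ Finset.range M, ((N:ℝ) + 1 + i) ^ (-(p + 1)) ≤ (1 / p) * (N:ℝ) ^ (-p) := by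
  have hN1 : (1:ℝ) ≤ (N:ℝ) := by exact_mod_cast hN
  set F : ℕ → ℝ := fun i => ((N:ℝ) + i) ^ (-p) with hFdef
  have key : ∀ i ∈ Finset.range M, p * ((N:ℝ) + 1 + i) ^ (-(p + 1)) ≤ F i - F (i + 1) := by
    intro i _
    have hi : (0:ℝ) ≤ i := Nat.cast_nonneg i
    have h1 : (1:ℝ) ≤ (N:ℝ) + i := by linarith
    have := core_ineq p hp ((N:ℝ) + i) h1
    have e1 : (N:ℝ) + i + 1 = (N:ℝ) + 1 + i := by ring
    have e2 : ((N:ℝ) + ↑(i + 1)) = (N:ℝ) + i + 1 := by push_cast; ring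
    simp only [hFdef, e2]
    rw [← e1]
    exact this
  have hsum := Finset.sum_le_sum key
  rw [Finset.sum_sub_distrib] at hsum
  have htel : ∑ i ∈ Finset.range M, F i - ∑ i ∈ Finset.range M, F (i + 1) = F 0 - F M := by
    rw [← Finset.sum_sub_distrib]
    exact Finset.sum_range_sub' F M
  rw [htel] at hsum
  have hFM : 0 ≤ F M := Real.rpow_nonneg (by positivity) _
  have hF0 : F 0 = (N:ℝ) ^ (-p) := by simp [hFdef]
  have : p * ∑ i ∈ Finset.range M, ((N:ℝ) + 1 + i) ^ (-(p + 1)) ≤ (N:ℝ) ^ (-p) := by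
    rw [Finset.mul_sum]
    calc ∑ i ∈ Finset.range M, p * ((N:ℝ) + 1 + i) ^ (-(p + 1)) ≤ F 0 - F M := hsum
      _ ≤ (N:ℝ) ^ (-p) := by rw [hF0]; linarith
  calc ∑ i ∈ Finset.range M, ((N:ℝ) + 1 + i) ^ (-(p + 1))
      = p⁻¹ * (p * ∑ i ∈ Finset.range M, ((N:ℝ) + 1 + i) ^ (-(p + 1))) := by
        field_simp
    _ ≤ p⁻¹ * ((N:ℝ) ^ (-p)) := mul_le_mul_of_nonneg_left this (by positivity)
    _ = (1 / p) * (N:ℝ) ^ (-p) := by rw [one_div]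

/-- Tail tsum estimate. -/
lemma tail_tsum (q : ℝ) (hq : 1 < q) (N : ℕ) (hN : 1 ≤ N) :
    ∑' i : ℕ, ((↑(i + (N + 1)) : ℝ) ^ q)⁻¹ ≤ (1 / (q - 1)) * (N:ℝ) ^ (-(q - 1)) := by
  have hp : 0 < q - 1 := by linarith
  have hsum : Summable (fun i : ℕ => ((↑(i + (N + 1)) : ℝ) ^ q)⁻¹) :=
    (summable_nat_add_iff (f := fun n : ℕ => ((n:ℝ) ^ q)⁻¹) (N + 1)).mpr
      (Real.summable_nat_rpow_inv.mpr hq)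
  apply Summable.tsum_le_of_sum_le hsum
  intro s
  obtain ⟨M, hM⟩ := s.exists_nat_subset_range
  have hterm : ∀ i : ℕ, ((↑(i + (N + 1)) : ℝ) ^ q)⁻¹ = ((N:ℝ) + 1 + i) ^ (-((q-1) + 1)) := by
    intro i
    have hpos : (0:ℝ) ≤ (N:ℝ) + 1 + i := by positivity
    rw [show -((q-1)+1) = -q by ring, Real.rpow_neg hpos]
    congr 2
    push_cast; ring
  calc ∑ i ∈ s, ((↑(i + (N + 1)) : ℝ) ^ q)⁻¹
      ≤ ∑ i ∈ Finset.range M, ((↑(i + (N + 1)) : ℝ) ^ q)⁻¹ := by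
        apply Finset.sum_le_sum_of_subset_of_nonneg hM
        intro i _ _; positivity
    _ = ∑ i ∈ Finset.range M, ((N:ℝ) + 1 + i) ^ (-((q-1) + 1)) := by
        exact Finset.sum_congr rfl fun i _ => hterm i
    _ ≤ (1 / (q - 1)) * (N:ℝ) ^ (-(q - 1)) := tele_sum (q-1) hp N hN M

/-- Kernel boundedness (Lemma 2.1): `sup_{z,z'} |K_z(z')| ≤ c_m² h⁻¹` with `h = λ^{1/(2m)}`. -/
theorem stmt7 (m c ch : ℝ) (hm : 1/2 < m) (hc : 0 < c) (hch : 0 < ch)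
    (γ : ℕ → ℝ) (hγ0 : γ 0 = 0) (hγnn : ∀ ν, 0 ≤ γ ν)
    (hγlb : ∀ ν : ℕ, 1 ≤ ν → c * (ν : ℝ) ^ (2*m) ≤ γ ν)
    (h : ℕ → ℝ → ℝ) (hhbd : ∀ ν, ∀ z ∈ Icc (0:ℝ) 1, |h ν z| ≤ ch) :
    ∃ cm : ℝ, 0 < cm ∧ ∀ l ∈ Ioc (0:ℝ) 1, ∀ z ∈ Icc (0:ℝ) 1, ∀ z' ∈ Icc (0:ℝ) 1,
      |∑' ν, h ν z * h ν z' / (1 + l * γ ν)| ≤ cm^2 * (l ^ (1/(2*m)))⁻¹ := by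
  classical
  have hp : (0:ℝ) < 2*m - 1 := by linarith
  have h2m : (1:ℝ) < 2*m := by linarith
  have h2m0 : (0:ℝ) < 2*m := by linarith
  set p : ℝ := 2*m - 1 with hpdef
  set C : ℝ := 3 + 1/(c*p) with hCdef
  have hC3 : (3:ℝ) ≤ C := by
    have h1 : (0:ℝ) ≤ 1/(c*p) := by positivity
    rw [hCdef]; linarith
  have hC0 : 0 < C := by linarith
  refine ⟨ch * Real.sqrt C, by positivity, ?_⟩
  intro l hl z hz z' hz'
  obtain ⟨hl0, hl1⟩ := hl
  have hcmsq : (ch * Real.sqrt C)^2 = ch^2 * C := by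
    rw [mul_pow, Real.sq_sqrt hC0.le]
  set H : ℝ := l ^ (1/(2*m)) with hHdef
  have hH0 : 0 < H := Real.rpow_pos_of_pos hl0 _
  have hH1 : H ≤ 1 := Real.rpow_le_one hl0.le hl1 (by positivity)
  have hHi : 1 ≤ H⁻¹ := (one_le_inv₀ hH0).mpr hH1
  set N : ℕ := ⌈H⁻¹⌉₊ with hNdef
  have hNge : H⁻¹ ≤ (N:ℝ) := Nat.le_ceil _
  have hN1 : 1 ≤ N := by
    have : (1:ℝ) ≤ (N:ℝ) := le_trans hHi hNge
    exact_mod_cast this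
  have hNle : (N:ℝ) ≤ H⁻¹ + 1 := (Nat.ceil_lt_add_one (by positivity)).le
  -- comparison function
  set g : ℕ → ℝ := fun ν => ch^2 * (if ν ≤ N then 1 else (c*l)⁻¹ * ((ν:ℝ)^(2*m))⁻¹) with hgdef
  have hsum0 : Summable (fun ν : ℕ => ((ν:ℝ)^(2*m))⁻¹) := Real.summable_nat_rpow_inv.mpr h2m
  have hinner : Summable (fun ν : ℕ => if ν ≤ N then (1:ℝ) else (c*l)⁻¹ * ((ν:ℝ)^(2*m))⁻¹) := by
    rw [← summable_nat_add_iff (N+1)]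
    refine Summable.congr (((summable_nat_add_iff (N+1)).mpr hsum0).mul_left (c*l)⁻¹) ?_
    intro n
    rw [if_neg (by omega)]
  have hgsum : Summable g := hinner.mul_left _
  -- term bound
  have hterm : ∀ ν, |h ν z * h ν z' / (1 + l * γ ν)| ≤ g ν := by
    intro ν
    have hd : (1:ℝ) ≤ 1 + l * γ ν := by nlinarith [hγnn ν]
    have hd0 : (0:ℝ) < 1 + l * γ ν := by linarith
    have hnum : |h ν z * h ν z'| ≤ ch^2 := by
      rw [abs_mul]
      calc |h ν z| * |h ν z'| ≤ ch * ch :=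
            mul_le_mul (hhbd ν z hz) (hhbd ν z' hz') (abs_nonneg _) hch.le
        _ = ch^2 := by ring
    rw [abs_div, abs_of_pos hd0]
    by_cases hνN : ν ≤ N
    · simp only [hgdef, if_pos hνN, mul_one]
      calc |h ν z * h ν z'| / (1 + l * γ ν) ≤ |h ν z * h ν z'| :=
            div_le_self (abs_nonneg _) hd
        _ ≤ ch^2 := hnum
    · have hν1 : 1 ≤ ν := by omega
      have hν0 : (0:ℝ) < (ν:ℝ) := by exact_mod_cast Nat.lt_of_lt_of_le Nat.zero_lt_one hν1
      have hpow : 0 < (ν:ℝ)^(2*m) := Real.rpow_pos_of_pos hν0 _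
      have hγb : c * (ν:ℝ)^(2*m) ≤ γ ν := hγlb ν hν1
      have h1 : c * l * (ν:ℝ)^(2*m) ≤ 1 + l * γ ν := by nlinarith
      have h2 : 0 < c * l * (ν:ℝ)^(2*m) := by positivity
      simp only [hgdef, if_neg hνN]
      calc |h ν z * h ν z'| / (1 + l * γ ν) ≤ ch^2 / (c * l * (ν:ℝ)^(2*m)) :=
            div_le_div₀ (by positivity) hnum h2 h1
        _ = ch^2 * ((c*l)⁻¹ * ((ν:ℝ)^(2*m))⁻¹) := by
            field_simp
  -- kernel summable and bounded by tsum g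
  have habs : |∑' ν, h ν z * h ν z' / (1 + l * γ ν)| ≤ ∑' ν, g ν := by
    have := tsum_of_norm_bounded (f := fun ν => h ν z * h ν z' / (1 + l * γ ν))
      hgsum.hasSum (fun ν => by rw [Real.norm_eq_abs]; exact hterm ν)
    simpa [Real.norm_eq_abs] using this
  -- compute/estimate tsum g
  have hsplit : ∑' ν, (if ν ≤ N then (1:ℝ) else (c*l)⁻¹ * ((ν:ℝ)^(2*m))⁻¹)
      = (N:ℝ) + 1 + (c*l)⁻¹ * ∑' i : ℕ, ((↑(i + (N+1)) : ℝ)^(2*m))⁻¹ := by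
    rw [← Summable.sum_add_tsum_nat_add (N+1) hinner]
    congr 1
    · rw [Finset.sum_congr rfl (fun i hi => if_pos (by
        simp only [Finset.mem_range] at hi; omega))]
      simp
    · rw [← tsum_mul_left]
      exact tsum_congr fun i => by rw [if_neg (by omega)]
  have htail : ∑' i : ℕ, ((↑(i + (N+1)) : ℝ)^(2*m))⁻¹ ≤ (1/p) * (N:ℝ)^(-p) := by
    have := tail_tsum (2*m) h2m N hN1
    simpa [hpdef] using this
  -- N^{-p} ≤ H^p = l / H
  have hNp : (N:ℝ)^(-p) ≤ H^p := by
    have h1 : (H⁻¹)^p ≤ (N:ℝ)^p := Real.rpow_le_rpow (by positivity) hNge hp.le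
    have h2 : (H⁻¹)^p = (H^p)⁻¹ := Real.inv_rpow hH0.le p
    have h3 : 0 < (H^p)⁻¹ := by
      rw [← h2]; exact Real.rpow_pos_of_pos (by positivity) p
    rw [Real.rpow_neg (Nat.cast_nonneg N)]
    calc ((N:ℝ)^p)⁻¹ ≤ ((H⁻¹)^p)⁻¹ := by
          apply inv_anti₀ (by rw [h2]; exact h3) h1
      _ = H^p := by rw [h2, inv_inv]
  have hHp : H^p = l / H := by
    rw [hHdef, ← Real.rpow_mul hl0.le]
    have he : 1/(2*m) * p = 1 - 1/(2*m) := by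
      rw [hpdef]; field_simp
    rw [he, Real.rpow_sub hl0, Real.rpow_one]
  -- final estimate
  have htsumg : ∑' ν, g ν ≤ ch^2 * C * H⁻¹ := by
    rw [hgdef]
    rw [tsum_mul_left, hsplit]
    have hcl : (0:ℝ) < c * l := by positivity
    have step1 : (c*l)⁻¹ * ∑' i : ℕ, ((↑(i + (N+1)) : ℝ)^(2*m))⁻¹
        ≤ (c*l)⁻¹ * ((1/p) * (l / H)) := by
      apply mul_le_mul_of_nonneg_left _ (by positivity)
      calc ∑' i : ℕ, ((↑(i + (N+1)) : ℝ)^(2*m))⁻¹ ≤ (1/p) * (N:ℝ)^(-p) := htail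
        _ ≤ (1/p) * (l / H) := by
            rw [← hHp]
            exact mul_le_mul_of_nonneg_left hNp (by positivity)
    have step2 : (c*l)⁻¹ * ((1/p) * (l / H)) = (1/(c*p)) * H⁻¹ := by
      field_simp
    have hNb : (N:ℝ) + 1 ≤ 3 * H⁻¹ := by linarith
    have : (N:ℝ) + 1 + (c*l)⁻¹ * ∑' i : ℕ, ((↑(i + (N+1)) : ℝ)^(2*m))⁻¹
        ≤ 3 * H⁻¹ + (1/(c*p)) * H⁻¹ := by
      rw [← step2]; linarith [step1]
    calc ch^2 * ((N:ℝ) + 1 + (c*l)⁻¹ * ∑' i : ℕ, ((↑(i + (N+1)) : ℝ)^(2*m))⁻¹)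
        ≤ ch^2 * (3 * H⁻¹ + (1/(c*p)) * H⁻¹) := by
          apply mul_le_mul_of_nonneg_left this (by positivity)
      _ = ch^2 * C * H⁻¹ := by rw [hCdef]; ring
  rw [hcmsq]
  calc |∑' ν, h ν z * h ν z' / (1 + l * γ ν)| ≤ ∑' ν, g ν := habs
    _ ≤ ch^2 * C * H⁻¹ := htsumg
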